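/- Separable-block relative Lipschitzness for minimax finite sums: fix n ≥ 1, γ ≥ 0, μ^x, μ^y > 0, an anchor tuple (x̄, ȳ, ū₁, …, ūₙ, v̄₁, …, v̄ₙ), indices j, k ∈ [n], and weights p_j ≥ 1/(2n), q_k ≥ 1/(2n). For a tuple z = (z^x, z^y, z^{u_1}, …, z^{u_n}, z^{v_1}, …, z^{v_n}) define the sparse separable operator Φ^sep_{jk}(z) with 𝒳-block (1+γ)μ^x z^x − γμ^x x̄, 𝒴-block (1+γ)μ^y z^y − γμ^y ȳ, j-th f-dual block (1/(n p_j))((1+γ)z^{u_j} − γ ū_j), k-th g-dual block (1/(n q_k))((1+γ)z^{v_k} − γ v̄_k), and all other blocks zero. Then for all tuples w, w', w'' in 𝒳 × 𝒴 × 𝒳ⁿ × 𝒴ⁿ: ⟨Φ^sep_{jk}(w')^x − Φ^sep_{jk}(w)^x, w'^x − w''^x⟩ + ⟨Φ^sep_{jk}(w')^y − Φ^sep_{jk}(w)^y, w'^y − w''^y⟩ + ⟨Φ^sep_{jk}(w')^{f_j} − Φ^sep_{jk}(w)^{f_j}, ∇f_j(w'^{u_j}) − ∇f_j(w''^{u_j})⟩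 + ⟨Φ^sep_{jk}(w')^{g_k} − Φ^sep_{jk}(w)^{g_k}, ∇g_k(w'^{v_k}) − ∇g_k(w''^{v_k})⟩ ≤ 2n(1+γ)·(V^r_w(w') + V^r_{w'}(w'')), where V^r_z(z') := μ^x V_{z^x}(z'^x) + μ^y V_{z^y}(z'^y) + (1/n)∑_{i=1}^n V^{f_i}_{z'^{u_i}}(z^{u_i}) + (1/n)∑_{i=1}^n V^{g_i}_{z'^{v_i}}(z^{v_i}). -/

import Mathlib

open scoped RealInnerProductSpace

/-- Bregman divergence `V^φ_u(v) = φ(v) - φ(u) - ⟪∇φ(u), v - u⟫`, with explicit gradient `φ'`. -/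
noncomputable def breg {X : Type*} [NormedAddCommGroup X] [InnerProductSpace ℝ X]
    (φ : X → ℝ) (φ' : X → X) (u v : X) : ℝ :=
  φ v - φ u - ⟪φ' u, v - u⟫

set_option maxHeartbeats 1000000


lemma grad_ineq {X : Type*} [NormedAddCommGroup X] [InnerProductSpace ℝ X]
    [CompleteSpace X] {f : X → ℝ} {f' : X → X}
    (hconv : ConvexOn ℝ Set.univ f) (hder : ∀ x, HasGradientAt f (f' x) x) (u v : X) :
    ⟪f' u, v - u⟫ ≤ f v - f u := by
  set A : ℝ →ᵃ[ℝ] X := AffineMap.lineMap u v with hA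
  set φ : ℝ → ℝ := fun t => f (A t) with hφ
  have hφconv : ConvexOn ℝ Set.univ φ := by
    have := hconv.comp_affineMap A
    simp only [Set.preimage_univ] at this
    exact this
  have h1 : HasDerivAt (fun t : ℝ => A t) (v - u) 0 := by
    simp only [hA, AffineMap.lineMap_apply_module']
    simpa using ((hasDerivAt_id (0:ℝ)).smul_const (v - u)).add_const u
  have h2 : HasFDerivAt f (InnerProductSpace.toDual ℝ X (f' u)) (A 0) := by
    have : A 0 = u := by simp [hA, AffineMap.lineMap_apply_module']
    rw [this]
    exact (hder u).hasFDerivAt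
  have hcomp : HasDerivAt φ ⟪f' u, v - u⟫ 0 := by
    have := h2.comp_hasDerivAt 0 h1
    simp [InnerProductSpace.toDual_apply_apply] at this
    exact this
  have hs := hφconv.le_slope_of_hasDerivAt (Set.mem_univ (0:ℝ)) (Set.mem_univ (1:ℝ))
    zero_lt_one hcomp
  have hslope : slope φ 0 1 = f v - f u := by
    simp [slope_def_field, hφ, hA, AffineMap.lineMap_apply_module']
  linarith [hs.trans_eq hslope]

lemma breg_nonneg {X : Type*} [NormedAddCommGroup X] [InnerProductSpace ℝ X]
    [CompleteSpace X] {f : X → ℝ} {f' : X → X}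
    (hconv : ConvexOn ℝ Set.univ f) (hder : ∀ x, HasGradientAt f (f' x) x) (u v : X) :
    0 ≤ breg f f' u v := by
  have := grad_ineq hconv hder u v
  simp only [breg]
  linarith

lemma three_point {X : Type*} [NormedAddCommGroup X] [InnerProductSpace ℝ X]
    [CompleteSpace X] {f : X → ℝ} {f' : X → X}
    (hconv : ConvexOn ℝ Set.univ f) (hder : ∀ x, HasGradientAt f (f' x) x) (u u' u'' : X) :
    ⟪u' - u, f' u' - f' u''⟫ ≤ breg f f' u' u + breg f f' u'' u' := by
  have h0 := breg_nonneg hconv hder u'' u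
  simp only [breg, inner_sub_left, inner_sub_right] at *
  linarith [real_inner_comm u' (f' u'), real_inner_comm u (f' u'),
    real_inner_comm u' (f' u''), real_inner_comm u (f' u''),
    real_inner_comm u'' (f' u'')]

lemma prod_bound {X : Type*} [NormedAddCommGroup X] [InnerProductSpace ℝ X]
    (a b c : X) : ⟪b - a, b - c⟫ ≤ 1 / 2 * ‖a - b‖ ^ 2 + 1 / 2 * ‖b - c‖ ^ 2 := by
  have h1 : ⟪b - a, b - c⟫ ≤ ‖b - a‖ * ‖b - c‖ := real_inner_le_norm _ _
  have h2 : ‖b - a‖ = ‖a - b‖ := norm_sub_rev _ _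
  nlinarith [sq_nonneg (‖a - b‖ - ‖b - c‖), norm_nonneg (a - b), norm_nonneg (b - c)]

/-- Separable-block relative Lipschitzness for minimax finite sums: the sparse separable
operator `Φ^sep_{jk}` is `2n(1+γ)`-relatively Lipschitz with respect to the regularizer `r`. -/
theorem stmt_19 {X Y : Type*} [NormedAddCommGroup X] [InnerProductSpace ℝ X]
    [FiniteDimensional ℝ X] [NormedAddCommGroup Y] [InnerProductSpace ℝ Y]
    [FiniteDimensional ℝ Y]
    (n : ℕ) (hn : 1 ≤ n) (μx μy : ℝ) (hμx : 0 < μx) (hμy : 0 < μy)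
    (γ : ℝ) (hγ : 0 ≤ γ)
    (f : Fin n → X → ℝ) (f' : Fin n → X → X)
    (g : Fin n → Y → ℝ) (g' : Fin n → Y → Y)
    (hfconv : ∀ i, ConvexOn ℝ Set.univ (f i))
    (hgconv : ∀ i, ConvexOn ℝ Set.univ (g i))
    (hfd : ∀ i x, HasGradientAt (f i) (f' i x) x)
    (hgd : ∀ i y, HasGradientAt (g i) (g' i y) y)
    -- anchor tuple
    (xbar : X) (ybar : Y) (ubar : Fin n → X) (vbar : Fin n → Y)
    -- sampled indices and weights
    (j k : Fin n) (pj qk : ℝ)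
    (hpj : 1 / (2 * (n : ℝ)) ≤ pj) (hqk : 1 / (2 * (n : ℝ)) ≤ qk)
    -- three tuples `w`, `w'`, `w''`
    (wx w'x w''x : X) (wy w'y w''y : Y)
    (wu w'u w''u : Fin n → X) (wv w'v w''v : Fin n → Y) :
    ⟪(((1 + γ) * μx) • w'x - (γ * μx) • xbar) - (((1 + γ) * μx) • wx - (γ * μx) • xbar),
        w'x - w''x⟫
      + ⟪(((1 + γ) * μy) • w'y - (γ * μy) • ybar) - (((1 + γ) * μy) • wy - (γ * μy) • ybar),
          w'y - w''y⟫
      + ⟪(1 / ((n : ℝ) * pj)) • ((1 + γ) • w'u j - γ • ubar j)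
            - (1 / ((n : ℝ) * pj)) • ((1 + γ) • wu j - γ • ubar j),
          f' j (w'u j) - f' j (w''u j)⟫
      + ⟪(1 / ((n : ℝ) * qk)) • ((1 + γ) • w'v k - γ • vbar k)
            - (1 / ((n : ℝ) * qk)) • ((1 + γ) • wv k - γ • vbar k),
          g' k (w'v k) - g' k (w''v k)⟫
    ≤ 2 * (n : ℝ) * (1 + γ) *
        ((μx * (1 / 2 * ‖wx - w'x‖ ^ 2) + μy * (1 / 2 * ‖wy - w'y‖ ^ 2)
            + (1 / (n : ℝ)) * ∑ i, breg (f i) (f' i) (w'u i) (wu i)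
            + (1 / (n : ℝ)) * ∑ i, breg (g i) (g' i) (w'v i) (wv i))
          + (μx * (1 / 2 * ‖w'x - w''x‖ ^ 2) + μy * (1 / 2 * ‖w'y - w''y‖ ^ 2)
              + (1 / (n : ℝ)) * ∑ i, breg (f i) (f' i) (w''u i) (w'u i)
              + (1 / (n : ℝ)) * ∑ i, breg (g i) (g' i) (w''v i) (w'v i))) := by
  have hn1 : (1 : ℝ) ≤ (n : ℝ) := by exact_mod_cast hn
  have hnpos : (0 : ℝ) < (n : ℝ) := by linarith
  -- rewrite the four first arguments
  have eX : (((1 + γ) * μx) • w'x - (γ * μx) • xbar) - (((1 + γ) * μx) • wx - (γ * μx) • xbar)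
      = ((1 + γ) * μx) • (w'x - wx) := by module
  have eY : (((1 + γ) * μy) • w'y - (γ * μy) • ybar) - (((1 + γ) * μy) • wy - (γ * μy) • ybar)
      = ((1 + γ) * μy) • (w'y - wy) := by module
  have eF : (1 / ((n : ℝ) * pj)) • ((1 + γ) • w'u j - γ • ubar j)
      - (1 / ((n : ℝ) * pj)) • ((1 + γ) • wu j - γ • ubar j)
      = ((1 + γ) / ((n : ℝ) * pj)) • (w'u j - wu j) := by
    rw [div_eq_mul_inv, div_eq_mul_inv]; module
  have eG : (1 / ((n : ℝ) * qk)) • ((1 + γ) • w'v k - γ • vbar k)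
      - (1 / ((n : ℝ) * qk)) • ((1 + γ) • wv k - γ • vbar k)
      = ((1 + γ) / ((n : ℝ) * qk)) • (w'v k - wv k) := by
    rw [div_eq_mul_inv, div_eq_mul_inv]; module
  rw [eX, eY, eF, eG, real_inner_smul_left, real_inner_smul_left, real_inner_smul_left,
    real_inner_smul_left]
  -- abbreviations
  set Ax := 1 / 2 * ‖wx - w'x‖ ^ 2 with hAx
  set Ax' := 1 / 2 * ‖w'x - w''x‖ ^ 2 with hAx'
  set Ay := 1 / 2 * ‖wy - w'y‖ ^ 2 with hAy
  set Ay' := 1 / 2 * ‖w'y - w''y‖ ^ 2 with hAy'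
  set Sf := ∑ i, breg (f i) (f' i) (w'u i) (wu i) with hSf
  set Sf' := ∑ i, breg (f i) (f' i) (w''u i) (w'u i) with hSf'
  set Sg := ∑ i, breg (g i) (g' i) (w'v i) (wv i) with hSg
  set Sg' := ∑ i, breg (g i) (g' i) (w''v i) (w'v i) with hSg'
  have hx : ⟪w'x - wx, w'x - w''x⟫ ≤ Ax + Ax' := prod_bound wx w'x w''x
  have hy : ⟪w'y - wy, w'y - w''y⟫ ≤ Ay + Ay' := prod_bound wy w'y w''y
  -- bounds via single_le_sum
  have hfnn : ∀ i : Fin n, 0 ≤ breg (f i) (f' i) (w'u i) (wu i) :=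
    fun i => breg_nonneg (hfconv i) (hfd i) _ _
  have hfnn' : ∀ i : Fin n, 0 ≤ breg (f i) (f' i) (w''u i) (w'u i) :=
    fun i => breg_nonneg (hfconv i) (hfd i) _ _
  have hgnn : ∀ i : Fin n, 0 ≤ breg (g i) (g' i) (w'v i) (wv i) :=
    fun i => breg_nonneg (hgconv i) (hgd i) _ _
  have hgnn' : ∀ i : Fin n, 0 ≤ breg (g i) (g' i) (w''v i) (w'v i) :=
    fun i => breg_nonneg (hgconv i) (hgd i) _ _
  have hSfnn : 0 ≤ Sf := Finset.sum_nonneg fun i _ => hfnn i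
  have hSfnn' : 0 ≤ Sf' := Finset.sum_nonneg fun i _ => hfnn' i
  have hSgnn : 0 ≤ Sg := Finset.sum_nonneg fun i _ => hgnn i
  have hSgnn' : 0 ≤ Sg' := Finset.sum_nonneg fun i _ => hgnn' i
  have hBj : breg (f j) (f' j) (w'u j) (wu j) ≤ Sf :=
    Finset.single_le_sum (fun i _ => hfnn i) (Finset.mem_univ j)
  have hBj' : breg (f j) (f' j) (w''u j) (w'u j) ≤ Sf' :=
    Finset.single_le_sum (fun i _ => hfnn' i) (Finset.mem_univ j)
  have hCk : breg (g k) (g' k) (w'v k) (wv k) ≤ Sg :=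
    Finset.single_le_sum (fun i _ => hgnn i) (Finset.mem_univ k)
  have hCk' : breg (g k) (g' k) (w''v k) (w'v k) ≤ Sg' :=
    Finset.single_le_sum (fun i _ => hgnn' i) (Finset.mem_univ k)
  have hcf : ⟪w'u j - wu j, f' j (w'u j) - f' j (w''u j)⟫ ≤ Sf + Sf' :=
    (three_point (hfconv j) (hfd j) (wu j) (w'u j) (w''u j)).trans (by linarith)
  have hcg : ⟪w'v k - wv k, g' k (w'v k) - g' k (w''v k)⟫ ≤ Sg + Sg' :=
    (three_point (hgconv k) (hgd k) (wv k) (w'v k) (w''v k)).trans (by linarith)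
  -- coefficient bounds
  have hpj' : (0 : ℝ) < (n : ℝ) * pj :=
    mul_pos hnpos (lt_of_lt_of_le (by positivity) hpj)
  have hqk' : (0 : ℝ) < (n : ℝ) * qk :=
    mul_pos hnpos (lt_of_lt_of_le (by positivity) hqk)
  have hcoefF : (1 + γ) / ((n : ℝ) * pj) ≤ 2 * (1 + γ) := by
    rw [div_le_iff₀ hpj']
    have h2 : (1:ℝ) / 2 ≤ (n:ℝ) * pj := by
      have := mul_le_mul_of_nonneg_left hpj (le_of_lt hnpos)
      calc (1:ℝ)/2 = (n:ℝ) * (1 / (2 * (n:ℝ))) := by field_simp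
        _ ≤ (n:ℝ) * pj := this
    nlinarith
  have hcoefG : (1 + γ) / ((n : ℝ) * qk) ≤ 2 * (1 + γ) := by
    rw [div_le_iff₀ hqk']
    have h2 : (1:ℝ) / 2 ≤ (n:ℝ) * qk := by
      have := mul_le_mul_of_nonneg_left hqk (le_of_lt hnpos)
      calc (1:ℝ)/2 = (n:ℝ) * (1 / (2 * (n:ℝ))) := by field_simp
        _ ≤ (n:ℝ) * qk := this
    nlinarith
  have hcoefFnn : (0:ℝ) ≤ (1 + γ) / ((n : ℝ) * pj) := by positivity
  have hcoefGnn : (0:ℝ) ≤ (1 + γ) / ((n : ℝ) * qk) := by positivity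
  -- assemble
  have hAxnn : 0 ≤ Ax := by positivity
  have hAx'nn : 0 ≤ Ax' := by positivity
  have hAynn : 0 ≤ Ay := by positivity
  have hAy'nn : 0 ≤ Ay' := by positivity
  have hrhs : 2 * (n : ℝ) * (1 + γ) *
      ((μx * Ax + μy * Ay + (1 / (n : ℝ)) * Sf + (1 / (n : ℝ)) * Sg)
        + (μx * Ax' + μy * Ay' + (1 / (n : ℝ)) * Sf' + (1 / (n : ℝ)) * Sg'))
      = 2 * (n : ℝ) * (1 + γ) * μx * (Ax + Ax') + 2 * (n : ℝ) * (1 + γ) * μy * (Ay + Ay')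
        + 2 * (1 + γ) * (Sf + Sf') + 2 * (1 + γ) * (Sg + Sg') := by
    field_simp
    ring
  rw [hrhs]
  have t1 : (1 + γ) * μx * ⟪w'x - wx, w'x - w''x⟫ ≤ 2 * (n : ℝ) * (1 + γ) * μx * (Ax + Ax') := by
    refine (mul_le_mul_of_nonneg_left hx (by positivity : (0:ℝ) ≤ (1 + γ) * μx)).trans
      (mul_le_mul_of_nonneg_right ?_ (by linarith : (0:ℝ) ≤ Ax + Ax'))
    nlinarith [mul_nonneg (mul_nonneg (by linarith : (0:ℝ) ≤ 2*(n:ℝ)-1)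
      (by linarith : (0:ℝ) ≤ 1+γ)) hμx.le]
  have t2 : (1 + γ) * μy * ⟪w'y - wy, w'y - w''y⟫ ≤ 2 * (n : ℝ) * (1 + γ) * μy * (Ay + Ay') := by
    refine (mul_le_mul_of_nonneg_left hy (by positivity : (0:ℝ) ≤ (1 + γ) * μy)).trans
      (mul_le_mul_of_nonneg_right ?_ (by linarith : (0:ℝ) ≤ Ay + Ay'))
    nlinarith [mul_nonneg (mul_nonneg (by linarith : (0:ℝ) ≤ 2*(n:ℝ)-1)
      (by linarith : (0:ℝ) ≤ 1+γ)) hμy.le]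
  have t3 : (1 + γ) / ((n : ℝ) * pj) * ⟪w'u j - wu j, f' j (w'u j) - f' j (w''u j)⟫
      ≤ 2 * (1 + γ) * (Sf + Sf') := by
    exact (mul_le_mul_of_nonneg_left hcf hcoefFnn).trans
      (mul_le_mul_of_nonneg_right hcoefF (by linarith : (0:ℝ) ≤ Sf + Sf'))
  have t4 : (1 + γ) / ((n : ℝ) * qk) * ⟪w'v k - wv k, g' k (w'v k) - g' k (w''v k)⟫
      ≤ 2 * (1 + γ) * (Sg + Sg') := by
    exact (mul_le_mul_of_nonneg_left hcg hcoefGnn).trans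
      (mul_le_mul_of_nonneg_right hcoefG (by linarith : (0:ℝ) ≤ Sg + Sg'))
  linarith
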